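/- Let U be an M × n matrix and let V be a d × n matrix all of whose entries satisfy |v_{i,j}| ≤ 1. Then the operator norm of the row product satisfies ‖U ⊗_r V‖ ≤ √d · ‖U‖, where ‖·‖ denotes the ℓ₂ → ℓ₂ operator norm. -/

import Mathlib

open MeasureTheory ProbabilityTheory Real
open scoped BigOperators ENNReal

noncomputable section

/-- The `K`-fold row product of `d × n` matrices: a `d^K × n` matrix (rows indexed by
`Fin K → Fin d`) whose rows are the entry-wise products of rows of the factors. -/
def rowProd {K d n : ℕ} (Δ : Fin K → Matrix (Fin d) (Fin n) ℝ) :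
    Matrix (Fin K → Fin d) (Fin n) ℝ :=
  fun i j => ∏ k, Δ k (i k) j

/-- The row product of two matrices with the same number of columns. -/
def rowProd2 {N M n : Type*} (A : Matrix N n ℝ) (B : Matrix M n ℝ) :
    Matrix (N × M) n ℝ :=
  fun p j => A p.1 j * B p.2 j

/-- `U ⊗_r xᵀ` : multiply each row of `U` coordinatewise by the vector `x`. -/
def rowProdVec {N n : Type*} (U : Matrix N n ℝ) (x : n → ℝ) : Matrix N n ℝ :=
  fun i j => U i j * x j

/-- Euclidean (ℓ₂) norm of a vector. -/
def l2norm {n : Type*} [Fintype n] (x : n → ℝ) : ℝ :=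
  Real.sqrt (∑ i, x i ^ 2)

/-- ℓ₁ norm of a vector. -/
def l1norm {n : Type*} [Fintype n] (x : n → ℝ) : ℝ :=
  ∑ i, |x i|

/-- ℓ∞ norm of a vector. -/
def linftyNorm {n : Type*} [Fintype n] (x : n → ℝ) : ℝ :=
  ⨆ i, |x i|

/-- The ℓ₂ → ℓ₂ operator norm of a matrix. -/
def opNorm {m n : Type*} [Fintype m] [Fintype n] [DecidableEq n] (A : Matrix m n ℝ) : ℝ :=
  ‖LinearMap.toContinuousLinearMap (Matrix.toEuclideanLin A)‖

/-- A `δ` random variable: bounded by 1 a.s., centered, with variance at least `δ²`. -/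
def IsDeltaRV {Ω : Type*} [MeasurableSpace Ω] (μ : Measure Ω) (δ : ℝ) (ξ : Ω → ℝ) : Prop :=
  Measurable ξ ∧ (∀ᵐ ω ∂μ, |ξ ω| ≤ 1) ∧ (∫ ω, ξ ω ∂μ = 0) ∧ δ ^ 2 ≤ ∫ ω, (ξ ω) ^ 2 ∂μ

lemma norm_sq_toEuclidean {m n : Type*} [Fintype m] [Fintype n] [DecidableEq n]
    (A : Matrix m n ℝ) (x : EuclideanSpace ℝ n) :
    ‖(LinearMap.toContinuousLinearMap (Matrix.toEuclideanLin A)) x‖ ^ 2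
      = ∑ i, (A.mulVec x i) ^ 2 := by
  rw [EuclideanSpace.norm_eq, Real.sq_sqrt (by positivity)]
  refine Finset.sum_congr rfl fun i _ => ?_
  rw [Real.norm_eq_abs, sq_abs]
  rfl

lemma mulVec_sq_le {m n : Type*} [Fintype m] [Fintype n] [DecidableEq n]
    (A : Matrix m n ℝ) (x : EuclideanSpace ℝ n) :
    ∑ i, (A.mulVec x i) ^ 2 ≤ opNorm A ^ 2 * ‖x‖ ^ 2 := by
  rw [← norm_sq_toEuclidean, ← mul_pow]
  exact pow_le_pow_left₀ (norm_nonneg _) ((LinearMap.toContinuousLinearMap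
    (Matrix.toEuclideanLin A)).le_opNorm x) 2

theorem stmt8 (M n d : ℕ) (U : Matrix (Fin M) (Fin n) ℝ) (V : Matrix (Fin d) (Fin n) ℝ)
    (hV : ∀ i j, |V i j| ≤ 1) :
    opNorm (rowProd2 U V) ≤ Real.sqrt d * opNorm U := by
  have hU : (0:ℝ) ≤ opNorm U := norm_nonneg _
  rw [opNorm]
  refine ContinuousLinearMap.opNorm_le_bound _ (by positivity) (fun x => ?_)
  have key : ‖(LinearMap.toContinuousLinearMap (Matrix.toEuclideanLin (rowProd2 U V))) x‖ ^ 2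
      ≤ (Real.sqrt d * opNorm U * ‖x‖) ^ 2 := by
    rw [norm_sq_toEuclidean]
    set y : Fin d → EuclideanSpace ℝ (Fin n) := fun k => WithLp.toLp 2 (fun j => V k j * x j) with hy
    have hyx : ∀ k, ‖y k‖ ^ 2 ≤ ‖x‖ ^ 2 := by
      intro k
      rw [EuclideanSpace.norm_eq, EuclideanSpace.norm_eq,
        Real.sq_sqrt (by positivity), Real.sq_sqrt (by positivity)]
      refine Finset.sum_le_sum fun j _ => ?_
      show ‖V k j * x j‖ ^ 2 ≤ ‖x j‖ ^ 2
      rw [norm_mul, mul_pow]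
      have h1 : ‖V k j‖ ^ 2 ≤ 1 := pow_le_one₀ (norm_nonneg _) (hV k j)
      nlinarith [sq_nonneg ‖(x j : ℝ)‖]
    have hsplit : ∑ p : Fin M × Fin d, ((rowProd2 U V).mulVec x p) ^ 2
        = ∑ k, ∑ i, (U.mulVec (y k) i) ^ 2 := by
      rw [Fintype.sum_prod_type, Finset.sum_comm]
      refine Finset.sum_congr rfl fun k _ => Finset.sum_congr rfl fun i _ => ?_
      congr 1
      simp only [Matrix.mulVec, dotProduct, rowProd2, hy]
      exact Finset.sum_congr rfl fun j _ => by show U i j * V k j * x j = U i j * (V k j * x j); ring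
    rw [hsplit]
    calc ∑ k, ∑ i, (U.mulVec (y k) i) ^ 2
        ≤ ∑ k : Fin d, opNorm U ^ 2 * ‖x‖ ^ 2 := by
          refine Finset.sum_le_sum fun k _ => le_trans (mulVec_sq_le U (y k)) ?_
          exact mul_le_mul_of_nonneg_left (hyx k) (by positivity)
      _ = (Real.sqrt d * opNorm U * ‖x‖) ^ 2 := by
          rw [Finset.sum_const, Finset.card_univ, Fintype.card_fin]
          rw [mul_pow, mul_pow, Real.sq_sqrt (Nat.cast_nonneg d)]
          ring
  have := Real.sqrt_le_sqrt key
  rwa [Real.sqrt_sq (norm_nonneg _), Real.sqrt_sq (by positivity)] at this
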